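/- Let T be a DFS tree of a finite connected simple graph G rooted at r, let r' be any vertex, and let P be the vertex set of the tree path from r to r' (i.e., the set of ancestors of r'). Then the connected components of the induced subgraph of G on V \ P are exactly the sets T(w) over the vertices w with w ∉ P and the parent of w in P (the subtrees of T hanging from P). -/

import Mathlib

/-- `u` is an ancestor of `v` in the tree `T` rooted at `r`:
`u` lies on the (unique) path in `T` from `r` to `v`. -/
def IsAncestor {V : Type*} (T : SimpleGraph V) (r u v : V) : Prop :=
  ∀ p : T.Walk r v, p.IsPath → u ∈ p.support

/-- `T(v)`: the set of descendants of `v` in the tree `T` rooted at `r`. -/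
def descendants {V : Type*} (T : SimpleGraph V) (r v : V) : Set V :=
  {w | IsAncestor T r v w}

/-- `T` is a DFS tree of `G` rooted at `r`: a spanning tree of `G` such that every edge of `G`
joins two vertices one of which is an ancestor of the other in `T`. -/
def IsDFSTree {V : Type*} (G T : SimpleGraph V) (r : V) : Prop :=
  T ≤ G ∧ T.IsTree ∧
    ∀ u v : V, G.Adj u v → IsAncestor T r u v ∨ IsAncestor T r v u

/-- `S` is a connected component of the subgraph of `G` induced on the vertex set `A`:
`S` is a nonempty subset of `A`, the induced subgraph on `S` is connected, and no edge of `G`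
joins `S` to `A \ S`. -/
def IsComponentOf {V : Type*} (G : SimpleGraph V) (A S : Set V) : Prop :=
  S ⊆ A ∧ S.Nonempty ∧ (SimpleGraph.induce S G).Connected ∧
    ∀ a ∈ S, ∀ b ∈ A, b ∉ S → ¬ G.Adj a b

/-- The subtree `T(w)` hangs from the vertex set `P`: `w ∉ P` and the parent of `w`
(the neighbor of `w` in `T` that is an ancestor of `w`) lies in `P`. -/
def HangsFrom {V : Type*} (T : SimpleGraph V) (r : V) (P : Set V) (w : V) : Prop :=
  w ∉ P ∧ ∃ u ∈ P, T.Adj u w ∧ IsAncestor T r u w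

section Aux

open SimpleGraph Walk

variable {V : Type*} {T G : SimpleGraph V}

lemma anc_refl (T : SimpleGraph V) (r v : V) : IsAncestor T r v v :=
  fun p _ => p.end_mem_support

lemma anc_root (T : SimpleGraph V) (r v : V) : IsAncestor T r r v :=
  fun p _ => p.start_mem_support

lemma anc_iff_mem (hT : T.IsTree) {r u v : V} (p : T.Walk r v) (hp : p.IsPath) :
    IsAncestor T r u v ↔ u ∈ p.support := by
  constructor
  · exact fun h => h p hp
  · intro h q hq
    rwa [(hT.existsUnique_path r v).unique hq hp]

lemma anc_trans (hT : T.IsTree) {r u v z : V}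
    (h1 : IsAncestor T r u v) (h2 : IsAncestor T r v z) : IsAncestor T r u z := by
  classical
  intro p hp
  have hv := h2 p hp
  have := h1 (p.takeUntil v hv) (hp.takeUntil hv)
  exact p.support_takeUntil_subset hv this

lemma anc_antisymm (hT : T.IsTree) {r u v : V}
    (h1 : IsAncestor T r u v) (h2 : IsAncestor T r v u) : u = v := by
  classical
  by_contra hne
  obtain ⟨p, hp, -⟩ := hT.existsUnique_path r v
  have hu : u ∈ p.support := h1 p hp
  have hvq : v ∈ (p.takeUntil u hu).support := h2 _ (hp.takeUntil hu)
  have hvd : v ∈ (p.dropUntil u hu).support.tail := by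
    have he := (p.dropUntil u hu).end_mem_support
    rw [Walk.support_eq_cons] at he
    rcases List.mem_cons.mp he with h | h
    · exact absurd h.symm hne
    · exact h
  have hnodup : (((p.takeUntil u hu).support) ++ ((p.dropUntil u hu).support.tail)).Nodup := by
    rw [← Walk.support_append, Walk.take_spec]
    exact hp.support_nodup
  exact (List.disjoint_of_nodup_append hnodup) hvq hvd

lemma takeUntil_cons' [DecidableEq V] {a b z u : V} (h : T.Adj a b) (p : T.Walk b z)
    (hu : u ∈ p.support) (hne : a ≠ u) :
    (Walk.cons h p).takeUntil u (by simp [hu]) = Walk.cons h (p.takeUntil u hu) := by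
  simp [Walk.takeUntil, hne]

lemma mem_takeUntil_or [DecidableEq V] :
    ∀ {a z : V} (p : T.Walk a z) {u v : V} (hu : u ∈ p.support) (hv : v ∈ p.support),
      v ∈ (p.takeUntil u hu).support ∨ u ∈ (p.takeUntil v hv).support := by
  intro a z p
  induction p with
  | nil =>
    intro u v hu hv
    rw [Walk.mem_support_nil_iff] at hu hv
    subst hu; subst hv
    left
    exact Walk.start_mem_support _
  | @cons a b z h p ih =>
    intro u v hu hv
    by_cases hva : a = v
    · subst hva
      left; exact Walk.start_mem_support _
    by_cases hua : a = u
    · subst hua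
      right; exact Walk.start_mem_support _
    have hu' : u ∈ p.support := by
      rcases List.mem_cons.mp (by simpa using hu) with h' | h'
      · exact absurd h'.symm hua
      · exact h'
    have hv' : v ∈ p.support := by
      rcases List.mem_cons.mp (by simpa using hv) with h' | h'
      · exact absurd h'.symm hva
      · exact h'
    have e1 : (Walk.cons h p).takeUntil u hu = Walk.cons h (p.takeUntil u hu') :=
      takeUntil_cons' h p hu' hua
    have e2 : (Walk.cons h p).takeUntil v hv = Walk.cons h (p.takeUntil v hv') :=
      takeUntil_cons' h p hv' hva
    rw [e1, e2]
    rcases ih hu' hv' with h' | h'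
    · left; simp [h']
    · right; simp [h']

lemma anc_total (hT : T.IsTree) {r u v z : V}
    (h1 : IsAncestor T r u z) (h2 : IsAncestor T r v z) :
    IsAncestor T r u v ∨ IsAncestor T r v u := by
  classical
  obtain ⟨p, hp, -⟩ := hT.existsUnique_path r z
  have hu : u ∈ p.support := h1 p hp
  have hv : v ∈ p.support := h2 p hp
  rcases mem_takeUntil_or p hu hv with h' | h'
  · right
    exact (anc_iff_mem hT (p.takeUntil u hu) (hp.takeUntil hu)).mpr h'
  · left
    exact (anc_iff_mem hT (p.takeUntil v hv) (hp.takeUntil hv)).mpr h'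

lemma dropUntil_anc [DecidableEq V] (hT : T.IsTree) {r v w : V} {p : T.Walk r v} (hp : p.IsPath)
    (hw : w ∈ p.support) {x : V} (hx : x ∈ (p.dropUntil w hw).support) :
    IsAncestor T r w x := by
  classical
  by_cases hxw : x = w
  · subst hxw; exact anc_refl T r x
  have hxt : x ∈ (p.dropUntil w hw).support.tail := by
    have := hx
    rw [Walk.support_eq_cons] at this
    rcases List.mem_cons.mp this with h' | h'
    · exact absurd h' hxw
    · exact h'
  have hxp : x ∈ p.support := p.support_dropUntil_subset hw hx
  have hnodup : (((p.takeUntil w hw).support) ++ ((p.dropUntil w hw).support.tail)).Nodup := by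
    rw [← Walk.support_append, Walk.take_spec]
    exact hp.support_nodup
  have hnot : x ∉ (p.takeUntil w hw).support := fun hmem =>
    (List.disjoint_of_nodup_append hnodup) hmem hxt
  rcases mem_takeUntil_or p hw hxp with h' | h'
  · exact absurd h' hnot
  · exact (anc_iff_mem hT (p.takeUntil x hxp) (hp.takeUntil hxp)).mpr h'

lemma anc_parent (hT : T.IsTree) {r u w b : V} (hadj : T.Adj u w)
    (huw : IsAncestor T r u w) (hb : IsAncestor T r b w) (hne : b ≠ w) :
    IsAncestor T r b u := by
  obtain ⟨q, hq, -⟩ := hT.existsUnique_path r u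
  have hwq : w ∉ q.support := by
    intro hmem
    have : w = u := anc_antisymm hT ((anc_iff_mem hT q hq).mpr hmem) huw
    exact hadj.ne this.symm
  have hq' : (q.concat hadj).IsPath := by
    rw [Walk.isPath_def, Walk.support_concat, ← List.concat_eq_append]
    exact List.Nodup.concat hwq hq.support_nodup
  have hbq : b ∈ (q.concat hadj).support := hb _ hq'
  rw [Walk.support_concat] at hbq
  rcases List.mem_append.mp hbq with h' | h'
  · exact (anc_iff_mem hT q hq).mpr h'
  · exact absurd (List.mem_singleton.mp h') hne

lemma anc_length (hT : T.IsTree) {r x w : V} (hxw : IsAncestor T r x w)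
    {px : T.Walk r x} {pw : T.Walk r w} (hpx : px.IsPath) (hpw : pw.IsPath) :
    px.length ≤ pw.length ∧ (px.length = pw.length → x = w) := by
  classical
  have hx : x ∈ pw.support := hxw pw hpw
  have hpe : px = pw.takeUntil x hx :=
    (hT.existsUnique_path r x).unique hpx (hpw.takeUntil hx)
  have hlen : (pw.takeUntil x hx).length + (pw.dropUntil x hx).length = pw.length := by
    have := congrArg Walk.length (pw.take_spec hx)
    rwa [Walk.length_append] at this
  constructor
  · rw [hpe]; omega
  · intro he
    rw [hpe] at he
    have : (pw.dropUntil x hx).length = 0 := by omega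
    exact Walk.eq_of_length_eq_zero this

lemma reach_induce (hTG : T ≤ G) (S : Set V) :
    ∀ {a b : V} (d : T.Walk a b) (_ : ∀ x ∈ d.support, x ∈ S)
      (ha : a ∈ S) (hb : b ∈ S),
      (SimpleGraph.induce S G).Reachable ⟨a, ha⟩ ⟨b, hb⟩ := by
  intro a b d
  induction d with
  | nil => intro _ _ _; rfl
  | @cons a c b h q ih =>
    intro hsup ha hb
    have hc : c ∈ S := hsup c (by simp)
    have hadj : (SimpleGraph.induce S G).Adj ⟨a, ha⟩ ⟨c, hc⟩ := by
      simp only [SimpleGraph.comap_adj, Function.Embedding.coe_subtype]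
      exact hTG h
    exact hadj.reachable.trans (ih (fun x hx => hsup x (by simp [hx])) hc hb)

lemma component_unique {A S₁ S₂ : Set V}
    (h1 : IsComponentOf G A S₁) (h2 : IsComponentOf G A S₂)
    (hx : (S₁ ∩ S₂).Nonempty) : S₁ = S₂ := by
  obtain ⟨x, hx1, hx2⟩ := hx
  have key : ∀ {A S₁ S₂ : Set V}, IsComponentOf G A S₁ → IsComponentOf G A S₂ →
      ∀ x, x ∈ S₁ → x ∈ S₂ → S₁ ⊆ S₂ := by
    intro A S₁ S₂ h1 h2 x hx1 hx2 y hy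
    obtain ⟨hsub, -, hconn, -⟩ := h1
    obtain ⟨-, -, -, hedge⟩ := h2
    obtain ⟨wlk⟩ := hconn ⟨x, hx1⟩ ⟨y, hy⟩
    -- walk in induce S₁ G, start in S₂ ⇒ end in S₂
    have : ∀ {a b : ↥S₁} (p : (SimpleGraph.induce S₁ G).Walk a b),
        (a : V) ∈ S₂ → (b : V) ∈ S₂ := by
      intro a b p
      induction p with
      | nil => exact id
      | @cons a c b h q ih =>
        intro haS
        apply ih
        by_contra hcS
        have hGadj : G.Adj (a : V) (c : V) := by
          simpa only [SimpleGraph.comap_adj, Function.Embedding.coe_subtype] using h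
        exact hedge a haS c (hsub c.2) hcS hGadj
    exact this wlk hx2
  exact Set.Subset.antisymm (key h1 h2 x hx1 hx2) (key h2 h1 x hx2 hx1)

lemma hang_component {r r' : V} {P : Set V}
    (hTG : T ≤ G) (hT : T.IsTree)
    (hDFS : ∀ u v : V, G.Adj u v → IsAncestor T r u v ∨ IsAncestor T r v u)
    (hP : ∀ x, x ∈ P ↔ IsAncestor T r x r')
    {w : V} (hw : HangsFrom T r P w) :
    IsComponentOf G Pᶜ (descendants T r w) := by
  classical
  obtain ⟨hwP, u, huP, hadj, huw⟩ := hw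
  have hsub : descendants T r w ⊆ Pᶜ := by
    intro v hv hvP
    exact hwP ((hP w).mpr (anc_trans hT hv ((hP v).mp hvP)))
  have hwd : w ∈ descendants T r w := anc_refl T r w
  refine ⟨hsub, ⟨w, hwd⟩, ?_, ?_⟩
  · -- connectivity
    have reach_w : ∀ a (ha : a ∈ descendants T r w),
        (SimpleGraph.induce (descendants T r w) G).Reachable ⟨w, hwd⟩ ⟨a, ha⟩ := by
      intro a ha
      obtain ⟨p, hp, -⟩ := hT.existsUnique_path r a
      have hwp : w ∈ p.support := ha p hp
      refine reach_induce hTG _ (p.dropUntil w hwp) ?_ hwd ha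
      intro x hx
      exact dropUntil_anc hT hp hwp hx
    rw [SimpleGraph.connected_iff]
    refine ⟨?_, ⟨⟨w, hwd⟩⟩⟩
    rintro ⟨a, ha⟩ ⟨b, hb⟩
    exact (reach_w a ha).symm.trans (reach_w b hb)
  · -- edge condition
    rintro a ha b hbP hbS hGab
    rcases hDFS a b hGab with h' | h'
    · exact hbS (anc_trans hT ha h')
    · rcases anc_total hT h' ha with h'' | h''
      · -- b anc w
        have hbw : b ≠ w := fun he => hbS (he ▸ anc_refl T r w)
        have hbu : IsAncestor T r b u := anc_parent hT hadj huw h'' hbw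
        exact hbP ((hP b).mpr (anc_trans hT hbu ((hP u).mp huP)))
      · exact hbS h''

end Aux

/-- Components property: if `T` is a DFS tree of a connected graph `G` rooted at `r` and
`P` is the set of vertices of the tree path from `r` to `r'` (the ancestors of `r'`), then the
connected components of the subgraph of `G` induced on `V \\ P` are exactly the sets `T(w)`
over the subtrees `T(w)` hanging from `P`. -/
theorem components_of_unvisited {V : Type*} [Fintype V] (G T : SimpleGraph V) (r : V)
    (hG : G.Connected) (hDFS : IsDFSTree G T r) (r' : V)
    (P : Set V) (hP : P = {u | IsAncestor T r u r'}) :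
    ∀ S : Set V, IsComponentOf G Pᶜ S ↔
      ∃ w, HangsFrom T r P w ∧ S = descendants T r w := by
  classical
  obtain ⟨hTG, hT, hdfs⟩ := hDFS
  have hP' : ∀ x, x ∈ P ↔ IsAncestor T r x r' := by
    intro x; rw [hP]; rfl
  intro S
  constructor
  · intro hS
    obtain ⟨hsub, ⟨v, hv⟩, -, -⟩ := id hS
    have hvP : v ∉ P := hsub hv
    -- find minimal ancestor of v not in P
    set f : V → ℕ := fun x => ((hT.existsUnique_path r x).exists).choose.length with hf
    have fspec : ∀ x, ((hT.existsUnique_path r x).exists).choose.IsPath :=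
      fun x => ((hT.existsUnique_path r x).exists).choose_spec
    set F : Finset V := Finset.univ.filter (fun x => IsAncestor T r x v ∧ x ∉ P) with hF
    have hvF : v ∈ F := by simp [hF, anc_refl, hvP]
    obtain ⟨w, hwF, hmin⟩ := F.exists_min_image f ⟨v, hvF⟩
    have hwv : IsAncestor T r w v := by
      have := Finset.mem_filter.mp hwF; exact this.2.1
    have hwP : w ∉ P := by
      have := Finset.mem_filter.mp hwF; exact this.2.2
    have hminanc : ∀ x, IsAncestor T r x v → x ∉ P → IsAncestor T r w x := by
      intro x hxv hxP
      rcases anc_total hT hxv hwv with h' | h'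
      · have hxF : x ∈ F := by simp [hF, hxv, hxP]
        have hle := (anc_length hT h' (fspec x) (fspec w))
        have hge := hmin x hxF
        have : x = w := hle.2 (le_antisymm hle.1 hge)
        subst this; exact anc_refl T r x
      · exact h'
    -- w ≠ r
    have hrP : r ∈ P := (hP' r).mpr (anc_root T r r')
    have hwr : r ≠ w := fun he => hwP (he ▸ hrP)
    obtain ⟨p, hp, -⟩ := hT.existsUnique_path r w
    cases p with
    | nil => exact absurd rfl hwr
    | cons h q =>
      obtain ⟨x, q', h', heq⟩ := SimpleGraph.Walk.exists_cons_eq_concat h q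
      rw [heq] at hp
      have hq' : q'.IsPath := by
        rw [SimpleGraph.Walk.concat_eq_append] at hp
        exact hp.of_append_left
      have hxw : IsAncestor T r x w := by
        refine (anc_iff_mem hT (q'.concat h') ?_).mpr ?_
        · exact hp
        · rw [SimpleGraph.Walk.support_concat]
          exact List.mem_append.mpr (Or.inl q'.end_mem_support)
      have hxP : x ∈ P := by
        by_contra hxP
        have hxv : IsAncestor T r x v := anc_trans hT hxw hwv
        have : IsAncestor T r w x := hminanc x hxv hxP
        exact h'.ne (anc_antisymm hT hxw this)
      have hhang : HangsFrom T r P w := ⟨hwP, x, hxP, h', hxw⟩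
      have hcomp := hang_component hTG hT hdfs hP' hhang
      have : S = descendants T r w :=
        component_unique hS hcomp ⟨v, hv, hwv⟩
      exact ⟨w, hhang, this⟩
  · rintro ⟨w, hw, rfl⟩
    exact hang_component hTG hT hdfs hP' hw
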